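/- Assume the p=3 parasupersymmetry algebra, with Q₁ = (Q† + Q)/(2√3) and Q₂ = (Q† − Q)/(2√3·i). Let Ψ ≠ 0 satisfy Q₁Ψ = q₁Ψ and HΨ = EΨ (q₁, E ∈ ℝ). If E < 0, then Q²Ψ = 0, (Q†)²Ψ = 0, and (Q + Q†)Ψ = 2√3·q₁·Ψ. In other words, a state can have negative energy only if it is annihilated by Q² and (Q†)² and is an eigenvector of Q + Q† with real eigenvalue. -/

import Mathlib

open ContinuousLinearMap RCLike Filter

/-- The hermitian parasupercharge `Q₁ = (Q† + Q)/(2√3)`. -/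
noncomputable def hermQ1 {𝓗 : Type*} [NormedAddCommGroup 𝓗] [InnerProductSpace ℂ 𝓗]
    [CompleteSpace 𝓗] (Q : 𝓗 →L[ℂ] 𝓗) : 𝓗 →L[ℂ] 𝓗 :=
  ((2 * Real.sqrt 3 : ℝ) : ℂ)⁻¹ • (adjoint Q + Q)

/-- The hermitian parasupercharge `Q₂ = (Q† − Q)/(2√3·i)`. -/
noncomputable def hermQ2 {𝓗 : Type*} [NormedAddCommGroup 𝓗] [InnerProductSpace ℂ 𝓗]
    [CompleteSpace 𝓗] (Q : 𝓗 →L[ℂ] 𝓗) : 𝓗 →L[ℂ] 𝓗 :=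
  (((2 * Real.sqrt 3 : ℝ) : ℂ) * Complex.I)⁻¹ • (adjoint Q - Q)

section AuxPSUSY

variable {𝓗 : Type*} [NormedAddCommGroup 𝓗] [InnerProductSpace ℂ 𝓗] [CompleteSpace 𝓗]

local notation "⟪" x ", " y "⟫" => @inner ℂ _ _ x y

/-- The iteration `Pₙ₊₁ = Pₙ - Pₙ²` used to write a positive contraction as a sum of
squares. -/
private noncomputable def iterSeq (P0 : 𝓗 →L[ℂ] 𝓗) : ℕ → (𝓗 →L[ℂ] 𝓗)
  | 0 => P0
  | n+1 => iterSeq P0 n - (iterSeq P0 n) ^ 2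

private lemma iterSeq_inv {P0 C : 𝓗 →L[ℂ] 𝓗} (h0 : P0.IsPositive)
    (h1 : (1 - P0).IsPositive) (hc : P0 * C = C * P0) (n : ℕ) :
    (iterSeq P0 n).IsPositive ∧ (1 - iterSeq P0 n).IsPositive ∧
      (iterSeq P0 n * C = C * iterSeq P0 n) ∧
      ((∑ k ∈ Finset.range n, (iterSeq P0 k) ^ 2) + iterSeq P0 n = P0) := by
  induction n with
  | zero => exact ⟨h0, h1, hc, by simp [iterSeq]⟩
  | succ n ih =>
    obtain ⟨hp, hq, hcom, hsum⟩ := ih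
    set A := iterSeq P0 n with hA
    have hAsa : IsSelfAdjoint A := hp.isSelfAdjoint
    have hQsa : IsSelfAdjoint (1 - A) := hq.isSelfAdjoint
    have hstep : iterSeq P0 (n+1) = A - A ^ 2 := rfl
    have pos1 : (A ∘L (1 - A) ∘L A).IsPositive := by
      have := hq.adjoint_conj A
      rwa [hAsa.adjoint_eq] at this
    have pos2 : ((1 - A) ∘L A ∘L (1 - A)).IsPositive := by
      have := hp.adjoint_conj (1 - A)
      rwa [hQsa.adjoint_eq] at this
    have hid : A - A ^ 2 = A ∘L (1 - A) ∘L A + (1 - A) ∘L A ∘L (1 - A) := by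
      show A - A ^ 2 = A * ((1 - A) * A) + (1 - A) * (A * (1 - A))
      noncomm_ring
    have posS : (A - A ^ 2).IsPositive := by
      rw [hid]; exact pos1.add pos2
    have pos1' : (1 - (A - A ^ 2)).IsPositive := by
      have hA2 : (A ^ 2).IsPositive := by
        have := isPositive_one.adjoint_conj (F := 𝓗) A
        rw [hAsa.adjoint_eq] at this
        have h2 : A ∘L (1 : 𝓗 →L[ℂ] 𝓗) ∘L A = A ^ 2 := by
          show A * (1 * A) = A ^ 2; noncomm_ring
        rwa [h2] at this
      have : (1 - (A - A ^ 2)) = (1 - A) + A ^ 2 := by noncomm_ring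
      rw [this]; exact hq.add hA2
    have hcom2 : (A - A ^ 2) * C = C * (A - A ^ 2) := by
      have h2 : A ^ 2 * C = C * A ^ 2 := by
        rw [pow_two, mul_assoc, hcom, ← mul_assoc, hcom, mul_assoc]
      rw [sub_mul, mul_sub, hcom, h2]
    have hsum2 : (∑ k ∈ Finset.range (n+1), (iterSeq P0 k) ^ 2) + iterSeq P0 (n+1) = P0 := by
      rw [Finset.sum_range_succ, hstep, add_assoc]
      have h9 : A ^ 2 + (A - A ^ 2) = A := by abel
      rw [h9, hsum]
    exact ⟨hstep ▸ posS, hstep ▸ pos1', hstep ▸ hcom2, hsum2⟩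

/-- The product of two commuting positive operators is positive (at the level of the
quadratic form). -/
private lemma mul_isPositive_inner_nonneg {P C : 𝓗 →L[ℂ] 𝓗} (hP : P.IsPositive)
    (hC : C.IsPositive) (hPC : P * C = C * P) (x : 𝓗) :
    0 ≤ re ⟪(P * C) x, x⟫ := by
  have ht : (0:ℝ) < ‖P‖ + 1 := by positivity
  set t : ℝ := ‖P‖ + 1 with htdef
  set P0 : 𝓗 →L[ℂ] 𝓗 := ((t⁻¹:ℝ):ℂ) • P with hP0def
  have hstar : star ((t⁻¹:ℝ):ℂ) = ((t⁻¹:ℝ):ℂ) := Complex.conj_ofReal _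
  have h0 : P0.IsPositive := by
    constructor
    · rw [← isSelfAdjoint_iff_isSymmetric]
      show star _ = _
      rw [hP0def, star_smul, hstar, hP.isSelfAdjoint.star_eq]
    · intro y
      have := hP.2 y
      simp only [reApplyInnerSelf, hP0def, smul_apply, inner_smul_left, Complex.conj_ofReal,
        RCLike.re_to_complex, Complex.re_ofReal_mul] at *
      exact mul_nonneg (by positivity) this
  have h1 : (1 - P0).IsPositive := by
    constructor
    · rw [← isSelfAdjoint_iff_isSymmetric]
      show star _ = _
      rw [hP0def, star_sub, star_smul, star_one, hstar, hP.isSelfAdjoint.star_eq]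
    · intro y
      have h1' : re ⟪P y, y⟫ ≤ t * ‖y‖ ^ 2 := by
        calc re ⟪P y, y⟫ ≤ ‖⟪P y, y⟫‖ := RCLike.re_le_norm _
          _ ≤ ‖P y‖ * ‖y‖ := norm_inner_le_norm _ _
          _ ≤ (‖P‖ * ‖y‖) * ‖y‖ := by
              have := P.le_opNorm y
              nlinarith [norm_nonneg y]
          _ ≤ t * ‖y‖ ^ 2 := by rw [htdef]; nlinarith [norm_nonneg y, sq_nonneg ‖y‖]
      simp only [reApplyInnerSelf, hP0def, sub_apply, one_apply_eq_self, inner_sub_left, smul_apply,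
        inner_smul_left, Complex.conj_ofReal, map_sub,
        RCLike.re_to_complex, Complex.re_ofReal_mul, inner_self_eq_norm_sq]
      simp only [RCLike.re_to_complex] at h1'
      rw [sub_nonneg, inv_mul_le_iff₀ ht]
      nlinarith [h1']
  have hc0 : P0 * C = C * P0 := by
    rw [hP0def, smul_mul_assoc, hPC, mul_smul_comm]
  have inv := iterSeq_inv h0 h1 hc0
  set p := iterSeq P0 with hpdef
  have hsym : ∀ n (y z : 𝓗), ⟪p n y, z⟫ = ⟪y, p n z⟫ := fun n y z =>
    (inv n).1.isSelfAdjoint.isSymmetric y z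
  set L : ℝ := re ⟪(P0 * C) x, x⟫ with hLdef
  have hdecomp : ∀ n, L = (∑ k ∈ Finset.range n, re ⟪C (p k x), p k x⟫)
      + re ⟪C x, p n x⟫ := by
    intro n
    have hs := (inv n).2.2.2
    have e0 : P0 * C = (∑ k ∈ Finset.range n, (p k) ^ 2 * C) + p n * C := by
      rw [← hs, add_mul, Finset.sum_mul]
    have e1 : ∀ k, re ⟪((p k) ^ 2 * C) x, x⟫ = re ⟪C (p k x), p k x⟫ := by
      intro k
      have e2 : (p k) ^ 2 * C = p k * (C * p k) := by
        rw [pow_two, mul_assoc, (inv k).2.2.1]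
      rw [e2, mul_apply_eq_comp, hsym k _ x, mul_apply_eq_comp]
    have e3 : re ⟪(p n * C) x, x⟫ = re ⟪C x, p n x⟫ := by
      rw [mul_apply_eq_comp, hsym n _ x]
    rw [hLdef, e0]
    simp only [add_apply, sum_apply, inner_add_left, sum_inner, map_add, map_sum]
    rw [e3]
    congr 1
    exact Finset.sum_congr rfl fun k _ => e1 k
  have hterm : ∀ k, (0:ℝ) ≤ re ⟪C (p k x), p k x⟫ := fun k => hC.re_inner_nonneg_left _
  have hnorm : ∀ k, ‖p k x‖ ^ 2 = re ⟪((p k) ^ 2) x, x⟫ := by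
    intro k
    have e : ((p k) ^ 2) x = p k (p k x) := by rw [pow_two, mul_apply_eq_comp]
    rw [e, hsym k _ x, inner_self_eq_norm_sq]
  have hbound : ∀ n, (∑ k ∈ Finset.range n, ‖p k x‖ ^ 2) ≤ re ⟪P0 x, x⟫ := by
    intro n
    have hs := (inv n).2.2.2
    have e0 : re ⟪P0 x, x⟫ = (∑ k ∈ Finset.range n, re ⟪((p k) ^ 2) x, x⟫)
        + re ⟪p n x, x⟫ := by
      rw [← hs]
      simp only [add_apply, sum_apply, inner_add_left, sum_inner, map_add, map_sum]
    rw [e0]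
    have : (∑ k ∈ Finset.range n, ‖p k x‖ ^ 2)
        = ∑ k ∈ Finset.range n, re ⟪((p k) ^ 2) x, x⟫ :=
      Finset.sum_congr rfl fun k _ => hnorm k
    rw [this]
    have := (inv n).1.re_inner_nonneg_left x
    linarith
  have hsummable : Summable (fun k => ‖p k x‖ ^ 2) :=
    summable_of_sum_range_le (fun n => sq_nonneg _) hbound
  have h2zero : Tendsto (fun n => ‖p n x‖ ^ 2) atTop (nhds 0) :=
    hsummable.tendsto_atTop_zero
  have hzero : Tendsto (fun n => ‖p n x‖) atTop (nhds 0) := by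
    have hcont := (Real.continuous_sqrt.tendsto 0).comp h2zero
    simp only [Function.comp_def, Real.sqrt_zero] at hcont
    have : ∀ n, Real.sqrt (‖p n x‖ ^ 2) = ‖p n x‖ := fun n =>
      Real.sqrt_sq (norm_nonneg _)
    simpa only [this] using hcont
  have htail : Tendsto (fun n => re ⟪C x, p n x⟫) atTop (nhds 0) := by
    have hb : ∀ n, ‖re ⟪C x, p n x⟫‖ ≤ ‖C x‖ * ‖p n x‖ := by
      intro n
      calc ‖re ⟪C x, p n x⟫‖ ≤ ‖⟪C x, p n x⟫‖ := RCLike.norm_re_le_norm _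
        _ ≤ ‖C x‖ * ‖p n x‖ := norm_inner_le_norm _ _
    have hmul : Tendsto (fun n => ‖C x‖ * ‖p n x‖) atTop (nhds 0) := by
      simpa using hzero.const_mul ‖C x‖
    exact squeeze_zero_norm hb hmul
  have hL : 0 ≤ L := by
    have hle : ∀ n, re ⟪C x, p n x⟫ ≤ L := by
      intro n
      rw [hdecomp n]
      have : 0 ≤ ∑ k ∈ Finset.range n, re ⟪C (p k x), p k x⟫ :=
        Finset.sum_nonneg fun k _ => hterm k
      linarith
    exact le_of_tendsto' htail hle
  have hPt : P * C = ((t:ℝ):ℂ) • (P0 * C) := by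
    rw [hP0def, smul_mul_assoc, smul_smul, ← Complex.ofReal_mul,
      mul_inv_cancel₀ ht.ne']
    simp
  rw [hPt]
  simp only [smul_apply, inner_smul_left, Complex.conj_ofReal, RCLike.re_to_complex,
    Complex.re_ofReal_mul]
  exact mul_nonneg ht.le hL

/-- Pure ring computation: `P` commutes with `B†B`. -/
private lemma ring_aux {R : Type*} [Ring R] {b bd p h : R}
    (hch : (bd * b) * h = h * (bd * b))
    (hb1 : b * p = 6 * (b * h) - p * b)
    (hb2 : bd * p = 6 * (h * bd) - p * bd) :
    p * (bd * b) = (bd * b) * p := by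
  have key : (bd * b) * p = 6 * ((bd * b) * h) - 6 * (h * (bd * b)) + p * (bd * b) := by
    calc (bd * b) * p = bd * (b * p) := by rw [mul_assoc]
      _ = bd * (6 * (b * h) - p * b) := by rw [hb1]
      _ = 6 * (bd * (b * h)) - (bd * p) * b := by noncomm_ring
      _ = 6 * (bd * (b * h)) - (6 * (h * bd) - p * bd) * b := by rw [hb2]
      _ = 6 * ((bd * b) * h) - 6 * (h * (bd * b)) + p * (bd * b) := by noncomm_ring
  rw [key, hch]
  noncomm_ring

private lemma ring_flip {R : Type*} [Ring R] {p bd h : R}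
    (h' : p * bd + bd * p = h * bd * 6) :
    bd * p = 6 * (h * bd) - p * bd := by
  have h'' : p * bd + bd * p = 6 * (h * bd) := by rw [h']; noncomm_ring
  exact eq_sub_of_add_eq' h''

set_option maxHeartbeats 1600000 in
/-- The key annihilation lemma: if `B` commutes with `H` and satisfies
`BP + PB = 6BH` with `P = Q†Q + QQ†`, then any negative-energy eigenvector of `H`
is annihilated by `B`. -/
private lemma annihilate {Q H B : 𝓗 →L[ℂ] 𝓗} (hH : IsSelfAdjoint H)
    (hBH : B * H = H * B)
    (hBP : B * (adjoint Q * Q + Q * adjoint Q) + (adjoint Q * Q + Q * adjoint Q) * B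
      = 6 * (B * H))
    {Ψ : 𝓗} {E : ℝ} (hE : H Ψ = (E:ℂ) • Ψ) (hneg : E < 0) : B Ψ = 0 := by
  have hsQ : star Q = adjoint Q := star_eq_adjoint Q
  have hsQd : star (adjoint Q) = Q := by
    rw [star_eq_adjoint, adjoint_adjoint]
  have hsB : star B = adjoint B := star_eq_adjoint B
  have hPsa : IsSelfAdjoint (adjoint Q * Q + Q * adjoint Q) := by
    show star _ = _
    rw [star_add, star_mul, star_mul, hsQ, hsQd]
  have hPpos : (adjoint Q * Q + Q * adjoint Q).IsPositive := by
    refine ⟨isSelfAdjoint_iff_isSymmetric.mp hPsa, fun y => ?_⟩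
    have e1 : ⟪(adjoint Q) (Q y), y⟫ = ⟪Q y, Q y⟫ := adjoint_inner_left Q y (Q y)
    have e2 : ⟪Q ((adjoint Q) y), y⟫ = ⟪(adjoint Q) y, (adjoint Q) y⟫ :=
      (adjoint_inner_right Q ((adjoint Q) y) y).symm
    simp only [reApplyInnerSelf, add_apply, mul_apply_eq_comp, inner_add_left, e1, e2, map_add,
      inner_self_eq_norm_sq]
    positivity
  have hCpos : (adjoint B * B).IsPositive := by
    constructor
    · rw [← isSelfAdjoint_iff_isSymmetric]
      show star _ = _
      rw [star_mul, hsB, star_eq_adjoint, adjoint_adjoint]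
    · intro y
      have e1 : ⟪(adjoint B) (B y), y⟫ = ⟪B y, B y⟫ := adjoint_inner_left B y (B y)
      simp only [reApplyInnerSelf, mul_apply_eq_comp, e1, inner_self_eq_norm_sq]
      positivity
  have hBdH : adjoint B * H = H * adjoint B := by
    have h := congrArg star hBH
    rw [star_mul, star_mul, hH.star_eq, hsB] at h
    exact h.symm
  have hCH : (adjoint B * B) * H = H * (adjoint B * B) := by
    calc (adjoint B * B) * H = adjoint B * (B * H) := by rw [mul_assoc]
      _ = adjoint B * (H * B) := by rw [hBH]
      _ = (adjoint B * H) * B := by rw [← mul_assoc]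
      _ = (H * adjoint B) * B := by rw [hBdH]
      _ = H * (adjoint B * B) := by rw [mul_assoc]
  have hB1 : B * (adjoint Q * Q + Q * adjoint Q)
      = 6 * (B * H) - (adjoint Q * Q + Q * adjoint Q) * B := eq_sub_of_add_eq hBP
  have hB2 : adjoint B * (adjoint Q * Q + Q * adjoint Q)
      = 6 * (H * adjoint B) - (adjoint Q * Q + Q * adjoint Q) * adjoint B := by
    have h := congrArg star hBP
    rw [star_add, star_mul, star_mul, star_mul, hPsa.star_eq, hsB] at h
    rw [star_mul, hH.star_eq, hsB, star_ofNat] at h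
    exact ring_flip h
  have hPC : (adjoint Q * Q + Q * adjoint Q) * (adjoint B * B)
      = (adjoint B * B) * (adjoint Q * Q + Q * adjoint Q) :=
    ring_aux hCH hB1 hB2
  have key := mul_isPositive_inner_nonneg hPpos hCpos hPC Ψ
  rw [hPC] at key
  have h6 : (6 : 𝓗 →L[ℂ] 𝓗) * (B * H) = (6:ℂ) • (B * H) := by
    rw [Algebra.smul_def, map_ofNat]
  have e1 : ((adjoint B * B) * (adjoint Q * Q + Q * adjoint Q)) Ψ
      = (adjoint B) ((B * (adjoint Q * Q + Q * adjoint Q)) Ψ) := by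
    rw [mul_assoc, mul_apply_eq_comp]
  have e2 : (B * (adjoint Q * Q + Q * adjoint Q)) Ψ
      = ((6 * E : ℝ) : ℂ) • (B Ψ) - (adjoint Q * Q + Q * adjoint Q) (B Ψ) := by
    rw [hB1, sub_apply, h6, smul_apply, mul_apply_eq_comp, hE, map_smul, smul_smul, mul_apply_eq_comp]
    norm_cast
  rw [e1, e2, adjoint_inner_left] at key
  simp only [inner_sub_left, inner_smul_left, Complex.conj_ofReal, map_sub,
    RCLike.re_to_complex, Complex.re_ofReal_mul, inner_self_eq_norm_sq] at key
  have hp := hPpos.re_inner_nonneg_left (B Ψ)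
  simp only [RCLike.re_to_complex] at hp
  have hBn := inner_self_eq_norm_sq (𝕜 := ℂ) (B Ψ)
  simp only [RCLike.re_to_complex] at hBn
  rw [hBn] at key
  have h1 : ‖B Ψ‖ ^ 2 ≤ 0 := by nlinarith
  have h2 : ‖B Ψ‖ ^ 2 = 0 := le_antisymm h1 (sq_nonneg _)
  have h3 : ‖B Ψ‖ = 0 := pow_eq_zero_iff (two_ne_zero) |>.mp h2
  exact norm_eq_zero.mp h3

private lemma ring_ii {R : Type*} [Ring R] {q qd h : R}
    (hii : q^3 * qd + q^2 * qd * q + q * qd * q^2 + qd * q^3 = 6 * (q^2 * h)) :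
    q^2 * (qd * q + q * qd) + (qd * q + q * qd) * q^2 = 6 * (q^2 * h) := by
  rw [← hii]; noncomm_ring

private lemma ring_iv {R : Type*} [Ring R] {q qd h : R}
    (hiv : qd^3 * q + qd^2 * q * qd + qd * q * qd^2 + q * qd^3 = 6 * (qd^2 * h)) :
    qd^2 * (qd * q + q * qd) + (qd * q + q * qd) * qd^2 = 6 * (qd^2 * h) := by
  rw [← hiv]; noncomm_ring

private lemma ring_commsq {R : Type*} [Ring R] {q h : R} (hqh : q * h = h * q) :
    q^2 * h = h * q^2 := by
  rw [pow_two, mul_assoc, hqh, ← mul_assoc, hqh, mul_assoc]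

end AuxPSUSY

/-- Assuming the p=3 parasupersymmetry algebra, if `Ψ ≠ 0` satisfies
`Q₁Ψ = q₁Ψ` and `HΨ = EΨ` with `E < 0`, then `Q²Ψ = 0`, `(Q†)²Ψ = 0` and
`(Q + Q†)Ψ = 2√3·q₁·Ψ`. -/
theorem stmt13 {𝓗 : Type*} [NormedAddCommGroup 𝓗] [InnerProductSpace ℂ 𝓗] [CompleteSpace 𝓗]
    (Q H : 𝓗 →L[ℂ] 𝓗) (hH : IsSelfAdjoint H)
    (hQH : Q * H = H * Q) (hQdH : adjoint Q * H = H * adjoint Q)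
    (hii : Q ^ 3 * adjoint Q + Q ^ 2 * adjoint Q * Q + Q * adjoint Q * Q ^ 2
      + adjoint Q * Q ^ 3 = 6 * (Q ^ 2 * H))
    (hiii : Q * (adjoint Q) ^ 2 * Q = adjoint Q * Q ^ 2 * adjoint Q)
    (hiv : (adjoint Q) ^ 3 * Q + (adjoint Q) ^ 2 * Q * adjoint Q
      + adjoint Q * Q * (adjoint Q) ^ 2 + Q * (adjoint Q) ^ 3 = 6 * ((adjoint Q) ^ 2 * H))
    (hQ4 : Q ^ 4 = 0) (hQd4 : (adjoint Q) ^ 4 = 0)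
    (Ψ : 𝓗) (hΨ : Ψ ≠ 0) (q₁ E : ℝ)
    (hq₁ : hermQ1 Q Ψ = (q₁ : ℂ) • Ψ)
    (hE : H Ψ = (E : ℂ) • Ψ)
    (hneg : E < 0) :
    (Q ^ 2) Ψ = 0 ∧ ((adjoint Q) ^ 2) Ψ = 0 ∧
      (Q + adjoint Q) Ψ = ((2 * Real.sqrt 3 * q₁ : ℝ) : ℂ) • Ψ := by
  have hBH1 : Q ^ 2 * H = H * Q ^ 2 := ring_commsq hQH
  have hBH2 : (adjoint Q) ^ 2 * H = H * (adjoint Q) ^ 2 := ring_commsq hQdH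
  have hBP1 : Q ^ 2 * (adjoint Q * Q + Q * adjoint Q)
      + (adjoint Q * Q + Q * adjoint Q) * Q ^ 2 = 6 * (Q ^ 2 * H) := ring_ii hii
  have hBP2 : (adjoint Q) ^ 2 * (adjoint Q * Q + Q * adjoint Q)
      + (adjoint Q * Q + Q * adjoint Q) * (adjoint Q) ^ 2
      = 6 * ((adjoint Q) ^ 2 * H) := ring_iv hiv
  refine ⟨annihilate hH hBH1 hBP1 hE hneg, annihilate hH hBH2 hBP2 hE hneg, ?_⟩
  have hc : ((2 * Real.sqrt 3 : ℝ) : ℂ) ≠ 0 := by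
    have h3 : (0:ℝ) < 2 * Real.sqrt 3 := by positivity
    exact_mod_cast h3.ne'
  have h4 := congrArg (fun y => ((2 * Real.sqrt 3 : ℝ) : ℂ) • y) hq₁
  simp only [hermQ1, smul_apply, smul_smul, mul_inv_cancel₀ hc, one_smul] at h4
  have h5 : (Q + adjoint Q) Ψ = (adjoint Q + Q) Ψ := by rw [add_comm]
  rw [h5, h4]
  norm_cast
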